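/- There exists a family (e_t)_{t ∈ ℝ} of bijections ℕ → ℚ such that for all distinct s, t ∈ ℝ, the linearly ordered sets C_{e_s} and C_{e_t} are not order-isomorphic. In particular, there are 2^ℵ0 pairwise non-order-isomorphic ordered sets of the form C_e. -/

import Mathlib

/-- The underlying set of `C_e`: pairs `(n, i)` with `i ≤ n`. -/
def CElt : Type := {p : ℕ × ℕ // p.2 ≤ p.1}

/-- The linear order on `C_e` determined by an enumeration `e : ℕ → ℚ`:
`(m, i) ≤ (n, j)` iff `e m < e n`, or `m = n` and `i ≤ j`. -/
def Cle (e : ℕ → ℚ) (p q : CElt) : Prop :=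
  e p.val.1 < e q.val.1 ∨ (p.val.1 = q.val.1 ∧ p.val.2 ≤ q.val.2)

/-- strict version of `Cle`. -/
def Slt (e : ℕ → ℚ) (p q : CElt) : Prop :=
  e p.val.1 < e q.val.1 ∨ (p.val.1 = q.val.1 ∧ p.val.2 < q.val.2)

lemma slt_iff (e : ℕ → ℚ) (p q : CElt) :
    Slt e p q ↔ Cle e p q ∧ ¬ Cle e q p := by
  unfold Slt Cle
  constructor
  · rintro (h | ⟨h1, h2⟩)
    · refine ⟨Or.inl h, ?_⟩
      rintro (h' | ⟨h1', _⟩)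
      · exact absurd h' (lt_asymm h)
      · rw [h1'] at h; exact lt_irrefl _ h
    · refine ⟨Or.inr ⟨h1, h2.le⟩, ?_⟩
      rintro (h' | ⟨h1', h2'⟩)
      · rw [h1] at h'; exact lt_irrefl _ h'
      · omega
  · rintro ⟨h | ⟨h1, h2⟩, hn⟩
    · exact Or.inl h
    · refine Or.inr ⟨h1, ?_⟩
      rcases Nat.lt_or_ge p.val.2 q.val.2 with h | h
      · exact h
      · exact absurd (Or.inr ⟨h1.symm, h⟩) hn

/-- covering relation for `Slt`. -/
def Cov (e : ℕ → ℚ) (p q : CElt) : Prop :=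
  Slt e p q ∧ ∀ r, ¬ (Slt e p r ∧ Slt e r q)

lemma cov_iff (e : ℕ → ℚ) (he : Function.Surjective e) (p q : CElt) :
    Cov e p q ↔ p.val.1 = q.val.1 ∧ q.val.2 = p.val.2 + 1 := by
  constructor
  · rintro ⟨hs, hr⟩
    rcases hs with h | ⟨h1, h2⟩
    · exfalso
      obtain ⟨x, hx1, hx2⟩ := exists_between h
      obtain ⟨k, rfl⟩ := he x
      exact hr ⟨(k, 0), Nat.zero_le _⟩ ⟨Or.inl hx1, Or.inl hx2⟩
    · refine ⟨h1, ?_⟩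
      by_contra hne
      have hq : q.val.2 ≤ q.val.1 := q.property
      have hle : p.val.2 + 1 ≤ p.val.1 := by omega
      exact hr ⟨(p.val.1, p.val.2 + 1), hle⟩
        ⟨Or.inr ⟨rfl, Nat.lt_succ_self _⟩,
         Or.inr ⟨h1, show p.val.2 + 1 < q.val.2 by omega⟩⟩
  · rintro ⟨h1, h2⟩
    refine ⟨Or.inr ⟨h1, by omega⟩, ?_⟩
    rintro r ⟨(ha | ⟨ha1, ha2⟩), (hb | ⟨hb1, hb2⟩)⟩
    · rw [h1] at ha; exact lt_asymm ha hb
    · rw [h1, hb1] at ha; exact lt_irrefl _ ha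
    · rw [← ha1, ← h1] at hb; exact lt_irrefl _ hb
    · omega

section
variable {e e' : ℕ → ℚ} (φ : Cle e ≃r Cle e')

lemma slt_map (p q : CElt) : Slt e p q ↔ Slt e' (φ p) (φ q) := by
  rw [slt_iff, slt_iff]
  constructor
  · rintro ⟨h1, h2⟩
    exact ⟨φ.map_rel_iff.mpr h1, fun h => h2 (φ.map_rel_iff.mp h)⟩
  · rintro ⟨h1, h2⟩
    exact ⟨φ.map_rel_iff.mp h1, fun h => h2 (φ.map_rel_iff.mpr h)⟩

lemma cov_map (p q : CElt) : Cov e p q ↔ Cov e' (φ p) (φ q) := by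
  constructor
  · rintro ⟨h1, h2⟩
    refine ⟨(slt_map φ p q).mp h1, fun r' ⟨ha, hb⟩ => ?_⟩
    refine h2 (φ.symm r') ⟨?_, ?_⟩
    · rw [slt_map φ]; simpa using ha
    · rw [slt_map φ]; simpa using hb
  · rintro ⟨h1, h2⟩
    refine ⟨(slt_map φ p q).mpr h1, fun r ⟨ha, hb⟩ => ?_⟩
    exact h2 (φ r) ⟨(slt_map φ p r).mp ha, (slt_map φ r q).mp hb⟩

variable (he : Function.Surjective e) (he' : Function.Surjective e')

include he he' in
/-- Key rigidity lemma: every order isomorphism between `C_e` and `C_{e'}` is the identity. -/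
lemma riso_fixed : ∀ p : CElt, φ p = p := by
  -- step A: φ maps bottoms of blocks to bottoms of blocks
  have hbot : ∀ (n : ℕ), ((φ ⟨(n, 0), Nat.zero_le _⟩).val.2) = 0 := by
    intro n
    by_contra hj
    set P := φ ⟨(n, 0), Nat.zero_le _⟩ with hP
    have hPle : P.val.2 ≤ P.val.1 := P.property
    have hcov : Cov e' ⟨(P.val.1, P.val.2 - 1), by omega⟩ P := by
      exact (cov_iff e' he' _ _).mpr ⟨rfl, show P.val.2 = P.val.2 - 1 + 1 by omega⟩
    -- transfer back
    have := (cov_map φ (φ.symm ⟨(P.val.1, P.val.2 - 1), by omega⟩) ⟨(n, 0), Nat.zero_le _⟩).mpr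
      (by have hh := φ.apply_symm_apply (⟨(P.val.1, P.val.2 - 1), by omega⟩ : CElt); exact Eq.subst (motive := fun z => Cov e' z P) hh.symm hcov)
    replace this := (cov_iff e he _ _).mp this
    exact absurd this.2.symm (Nat.succ_ne_zero _)
  -- step B: induction along blocks
  have hblock : ∀ (n i : ℕ) (h : i ≤ n),
      (φ ⟨(n, i), h⟩).val = ((φ ⟨(n, 0), Nat.zero_le _⟩).val.1, i) := by
    intro n i
    induction i with
    | zero => intro h
              have := hbot n
              exact Prod.ext rfl this
    | succ i ih =>
      intro h
      have hi : i ≤ n := by omega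
      have hcov : Cov e ⟨(n, i), hi⟩ ⟨(n, i + 1), h⟩ := by
        exact (cov_iff e he _ _).mpr ⟨rfl, rfl⟩
      have hcov' := (cov_map φ _ _).mp hcov
      rw [cov_iff e' he'] at hcov'
      rw [ih hi] at hcov'
      obtain ⟨h1, h2⟩ := hcov'
      exact Prod.ext h1.symm (by simpa using h2)
  -- step C: tops of blocks force first coordinates to agree
  have hfst : ∀ n : ℕ, (φ ⟨(n, 0), Nat.zero_le _⟩).val.1 = n := by
    intro n
    set m := (φ ⟨(n, 0), Nat.zero_le _⟩).val.1 with hm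
    have htop := hblock n n le_rfl
    have hnm : n ≤ m := by
      have := (φ ⟨(n, n), le_rfl⟩).property
      rw [htop] at this; exact this
    rcases Nat.eq_or_lt_of_le hnm with h | h
    · exact h.symm
    · exfalso
      -- (n,n) is a top, but (m,n) is not
      have hcov' : Cov e' (φ ⟨(n, n), le_rfl⟩) ⟨(m, n + 1), h⟩ := by
        refine (cov_iff e' he' _ _).mpr ?_; rw [htop]; exact ⟨rfl, rfl⟩
      have := (cov_map φ ⟨(n, n), le_rfl⟩ (φ.symm ⟨(m, n + 1), h⟩)).mpr
        (by have hh := φ.apply_symm_apply (⟨(m, n + 1), h⟩ : CElt); exact Eq.subst (motive := fun z => Cov e' (φ ⟨(n, n), le_rfl⟩) z) hh.symm hcov')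
      replace this := (cov_iff e he _ _).mp this
      have hp := (φ.symm (⟨(m, n + 1), h⟩ : CElt)).property
      have ha : n = (φ.symm (⟨(m, n + 1), h⟩ : CElt)).val.1 := this.1
      have hb : (φ.symm (⟨(m, n + 1), h⟩ : CElt)).val.2 = n + 1 := this.2
      omega
  intro p
  obtain ⟨⟨n, i⟩, hpr⟩ := p
  have := hblock n i hpr
  rw [hfst n] at this
  exact Subtype.ext this
end

/-- swap within the pair `{2n, 2n+1}` according to a boolean condition on `n`. -/
def pairSwap (c : ℕ → Bool) (k : ℕ) : ℕ :=
  if c (k / 2) then (if k % 2 = 0 then k + 1 else k - 1) else k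

lemma pairSwap_invol (c : ℕ → Bool) : Function.Involutive (pairSwap c) := by
  intro k
  unfold pairSwap
  by_cases h : c (k / 2) = true
  · rw [if_pos h]
    by_cases h2 : k % 2 = 0
    · rw [if_pos h2]
      have : (k + 1) / 2 = k / 2 := by omega
      rw [this, if_pos h, if_neg (by omega)]
      omega
    · rw [if_neg h2]
      have : (k - 1) / 2 = k / 2 := by omega
      rw [this, if_pos h, if_pos (by omega)]
      omega
  · rw [if_neg h, if_neg h]

noncomputable def qEnum : ℕ ≃ ℚ := (Denumerable.eqv ℚ).symm

/-- the swap condition encoding a boolean sequence `a`. -/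
noncomputable def swapCond (a : ℕ → Bool) (n : ℕ) : Bool :=
  a n != decide (qEnum (2 * n) < qEnum (2 * n + 1))

noncomputable def myEnum (a : ℕ → Bool) : ℕ → ℚ :=
  fun k => qEnum (pairSwap (swapCond a) k)

lemma myEnum_bij (a : ℕ → Bool) : Function.Bijective (myEnum a) :=
  qEnum.bijective.comp (pairSwap_invol (swapCond a)).bijective

lemma myEnum_lt (a : ℕ → Bool) (n : ℕ) :
    myEnum a (2 * n) < myEnum a (2 * n + 1) ↔ a n = true := by
  have h1 : (2 * n) / 2 = n := by omega
  have h2 : (2 * n) % 2 = 0 := by omega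
  have h3 : (2 * n + 1) / 2 = n := by omega
  have h4 : (2 * n + 1) % 2 = 1 := by omega
  have h5 : (2 * n + 1) - 1 = 2 * n := by omega
  unfold myEnum pairSwap
  rw [h1, h2, h3, h4, h5]
  by_cases hq : qEnum (2 * n) < qEnum (2 * n + 1)
  · have hq' : ¬ qEnum (2 * n + 1) < qEnum (2 * n) := lt_asymm hq
    cases ha : a n <;> simp [swapCond, ha, hq, hq']
  · have hne : qEnum (2 * n + 1) ≠ qEnum (2 * n) := qEnum.injective.ne (by omega)
    have hq' : qEnum (2 * n + 1) < qEnum (2 * n) := lt_of_le_of_ne (le_of_not_gt hq) hne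
    cases ha : a n <;> simp [swapCond, ha, hq, hq', lt_asymm hq']

/-- there is a real-indexed family of enumerations of ℚ whose
associated ordered sets `C_e` are pairwise non-order-isomorphic. -/
theorem stmt_7 :
    ∃ E : ℝ → (ℕ → ℚ),
      (∀ t : ℝ, Function.Bijective (E t)) ∧
      (∀ s t : ℝ, s ≠ t → IsEmpty (Cle (E s) ≃r Cle (E t))) := by
  obtain ⟨g⟩ : Nonempty (ℝ ↪ (ℕ → Bool)) := by
    rw [← Cardinal.le_def, Cardinal.mk_real]
    rw [Cardinal.mk_arrow, Cardinal.mk_bool, Cardinal.mk_nat]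
    rw [Cardinal.lift_id, Cardinal.lift_id, ← Cardinal.two_power_aleph0]
  refine ⟨fun t => myEnum (g t), fun t => myEnum_bij (g t), fun s t hst => ?_⟩
  constructor
  intro φ
  have hgs : g s ≠ g t := fun h => hst (g.injective h)
  obtain ⟨n, hn⟩ : ∃ n, g s n ≠ g t n := by
    by_contra h
    push_neg at h
    exact hgs (funext h)
  have hfix := riso_fixed φ (myEnum_bij (g s)).surjective (myEnum_bij (g t)).surjective
  have key : ∀ p q : CElt, Cle (myEnum (g s)) p q ↔ Cle (myEnum (g t)) p q := by
    intro p q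
    rw [← φ.map_rel_iff, hfix p, hfix q]
  have := key ⟨(2 * n, 0), Nat.zero_le _⟩ ⟨(2 * n + 1, 0), Nat.zero_le _⟩
  unfold Cle at this
  simp only [show (2 * n : ℕ) ≠ 2 * n + 1 by omega, false_and, or_false] at this
  rw [myEnum_lt, myEnum_lt] at this
  exact hn (by rw [Bool.eq_iff_iff, ← this])
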